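/- Let φ be a strongly monotone continuous semiflow on a metric space X with closed partial order ≤ and open strict relation ≪ ⊆ ≤, with all orbits having compact closure. Suppose a point x satisfies x ≤ φ(T, x) and x ≠ φ(T, x) for some T > 0. Then φ(t, x) converges as t → ∞ to an equilibrium point p. -/

import Mathlib

open Filter Topology

private lemma flow_mono {X : Type*} [PartialOrder X] {lt : X → X → Prop}
    (hlt_le : ∀ a b, lt a b → a ≤ b) {φ : ℝ → X → X} (hφ0 : ∀ x, φ 0 x = x)
    (hmono : ∀ x y : X, x ≤ y → x ≠ y → ∀ t : ℝ, 0 < t → lt (φ t x) (φ t y))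
    {a b : X} (hab : a ≤ b) {t : ℝ} (ht : 0 ≤ t) : φ t a ≤ φ t b := by
  rcases eq_or_ne a b with rfl | hne
  · exact le_rfl
  rcases ht.lt_or_eq with h | h
  · exact hlt_le _ _ (hmono a b hab hne t h)
  · rw [← h, hφ0, hφ0]; exact hab

private lemma mono_seq_tendsto {X : Type*} [MetricSpace X] [PartialOrder X]
    (hclosed : IsClosed {q : X × X | q.1 ≤ q.2})
    {K : Set X} (hK : IsCompact K) {a : ℕ → X} (ha : Monotone a)
    (haK : ∀ n, a n ∈ K) : ∃ p, Tendsto a atTop (𝓝 p) := by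
  obtain ⟨p, hpK, ψ, hψ, hψt⟩ := hK.tendsto_subseq haK
  have hle : ∀ (q : X) (ms : ℕ → ℕ), Tendsto ms atTop atTop →
      Tendsto (fun n => a (ms n)) atTop (𝓝 q) → ∀ n, a n ≤ q := by
    intro q ms hms hq n
    have ht : Tendsto (fun j => (a n, a (ms j))) atTop (𝓝 (a n, q)) :=
      tendsto_const_nhds.prodMk_nhds hq
    exact hclosed.mem_of_tendsto ht ((hms.eventually_ge_atTop n).mono fun j hj => ha hj)
  have hap : ∀ n, a n ≤ p := hle p ψ hψ.tendsto_atTop hψt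
  refine ⟨p, tendsto_of_subseq_tendsto fun ns hns => ?_⟩
  obtain ⟨q, hqK, ms, hms, hmst⟩ := hK.tendsto_subseq (fun n => haK (ns n))
  have hq : ∀ n, a n ≤ q := hle q (ns ∘ ms) (hns.comp hms.tendsto_atTop) hmst
  have h1 : p ≤ q := by
    have ht : Tendsto (fun j => (a (ψ j), q)) atTop (𝓝 (p, q)) :=
      hψt.prodMk_nhds tendsto_const_nhds
    exact hclosed.mem_of_tendsto ht (Eventually.of_forall fun j => hq _)
  have h2 : q ≤ p := by
    have ht : Tendsto (fun j => (a (ns (ms j)), p)) atTop (𝓝 (q, p)) :=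
      hmst.prodMk_nhds tendsto_const_nhds
    exact hclosed.mem_of_tendsto ht (Eventually.of_forall fun j => hap _)
  exact ⟨ms, by rwa [le_antisymm h2 h1] at hmst⟩

private lemma cluster_eq {X : Type*} [MetricSpace X] {φ : ℝ → X → X}
    (hφc : Continuous fun q : ℝ × X => φ q.1 q.2)
    (hφadd : ∀ s t : ℝ, 0 ≤ s → 0 ≤ t → ∀ x, φ (s + t) x = φ s (φ t x))
    (y : X) {s : ℝ} (hs : 0 < s) {π : X}
    (hseq : Tendsto (fun n : ℕ => φ (n * s) y) atTop (𝓝 π))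
    {u : ℕ → ℝ} (hu0 : ∀ j, 0 ≤ u j) (hu : Tendsto u atTop atTop)
    {q : X} (hq : Tendsto (fun j => φ (u j) y) atTop (𝓝 q)) :
    ∃ r : ℝ, 0 ≤ r ∧ r ≤ s ∧ q = φ r π := by
  set n : ℕ → ℕ := fun j => ⌊u j / s⌋₊ with hn
  set r : ℕ → ℝ := fun j => u j - n j * s with hr
  have hrmem : ∀ j, r j ∈ Set.Icc (0 : ℝ) s := by
    intro j
    have h1 : (n j : ℝ) * s ≤ u j := by
      rw [← le_div_iff₀ hs]
      exact Nat.floor_le (div_nonneg (hu0 j) hs.le)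
    have h2 : u j < ((n j : ℝ) + 1) * s := by
      rw [← div_lt_iff₀ hs]
      exact Nat.lt_floor_add_one (u j / s)
    rw [add_mul, one_mul] at h2
    exact ⟨by simp only [hr]; linarith, by simp only [hr]; linarith⟩
  have hnt : Tendsto n atTop atTop := by
    rw [tendsto_atTop]
    intro b
    filter_upwards [hu.eventually_ge_atTop ((b : ℝ) * s)] with j hj
    exact Nat.le_floor ((le_div_iff₀ hs).2 hj)
  obtain ⟨r₀, hr₀, ψ, hψ, hrt⟩ := isCompact_Icc.tendsto_subseq hrmem
  have h1 : Tendsto (fun k => φ ((n (ψ k) : ℝ) * s) y) atTop (𝓝 π) :=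
    hseq.comp (hnt.comp hψ.tendsto_atTop)
  have h2 : Tendsto (fun k => φ (r (ψ k)) (φ ((n (ψ k) : ℝ) * s) y)) atTop (𝓝 (φ r₀ π)) := by
    have := (hφc.tendsto (r₀, π)).comp (Tendsto.prodMk_nhds hrt h1)
    exact this
  have h3 : ∀ k, φ (r (ψ k)) (φ ((n (ψ k) : ℝ) * s) y) = φ (u (ψ k)) y := by
    intro k
    rw [← hφadd _ _ (hrmem (ψ k)).1 (mul_nonneg (Nat.cast_nonneg _) hs.le)]
    congr 1
    simp [hr]
  have h4 : Tendsto (fun k => φ (u (ψ k)) y) atTop (𝓝 q) := hq.comp hψ.tendsto_atTop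
  exact ⟨r₀, hr₀.1, hr₀.2, (tendsto_nhds_unique (h2.congr h3) h4).symm⟩

private lemma eq_extend {X : Type*} {φ : ℝ → X → X}
    (hφadd : ∀ s t : ℝ, 0 ≤ s → 0 ≤ t → ∀ x, φ (s + t) x = φ s (φ t x))
    {p : X} {c : ℝ} (hc : 0 < c) (h : ∀ r, 0 ≤ r → r ≤ c → φ r p = p) :
    ∀ t, 0 ≤ t → φ t p = p := by
  have key : ∀ n : ℕ, ∀ t, 0 ≤ t → t ≤ n * c → φ t p = p := by
    intro n
    induction n with
    | zero =>
      intro t ht ht'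
      simp only [Nat.cast_zero, zero_mul] at ht'
      exact h t ht (by linarith)
    | succ n ih =>
      intro t ht ht'
      by_cases htc : t ≤ c
      · exact h t ht htc
      · push_neg at htc
        have h1 : 0 ≤ t - c := by linarith
        have hcast : ((n + 1 : ℕ) : ℝ) * c = (n : ℝ) * c + c := by push_cast; ring
        have h2 : t - c ≤ (n : ℝ) * c := by rw [hcast] at ht'; linarith
        calc φ t p = φ (c + (t - c)) p := by rw [show c + (t - c) = t by ring]
          _ = φ c (φ (t - c) p) := hφadd c (t - c) hc.le h1 p
          _ = φ c p := by rw [ih (t - c) h1 h2]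
          _ = p := h c hc.le le_rfl
  intro t ht
  obtain ⟨m, hm⟩ := exists_nat_ge (t / c)
  exact key m t ht ((div_le_iff₀ hc).1 hm)

/-- Hirsch's convergence criterion: if `x ≤ φ T x` with `x ≠ φ T x` for some
`T > 0` and the orbit of `x` is precompact, then `φ t x` converges to an
equilibrium as `t → ∞`. -/
theorem convergence_criterion {X : Type*} [MetricSpace X] [PartialOrder X]
    (lt : X → X → Prop)
    (hclosed : IsClosed {q : X × X | q.1 ≤ q.2})
    (hlt_le : ∀ a b, lt a b → a ≤ b)
    (hlt_ne : ∀ a b, lt a b → a ≠ b)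
    (hopen : ∀ a b, lt a b → ∃ U V : Set X, IsOpen U ∧ IsOpen V ∧ a ∈ U ∧ b ∈ V ∧
      ∀ u ∈ U, ∀ v ∈ V, lt u v)
    (φ : ℝ → X → X)
    (hφc : Continuous fun q : ℝ × X => φ q.1 q.2)
    (hφ0 : ∀ x, φ 0 x = x)
    (hφadd : ∀ s t : ℝ, 0 ≤ s → 0 ≤ t → ∀ x, φ (s + t) x = φ s (φ t x))
    (hmono : ∀ x y : X, x ≤ y → x ≠ y → ∀ t : ℝ, 0 < t → lt (φ t x) (φ t y))
    (hcompact : ∀ z : X, IsCompact (closure {w | ∃ t : ℝ, 0 ≤ t ∧ φ t z = w}))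
    (x : X) (T : ℝ) (hT : 0 < T)
    (hord : x ≤ φ T x) (hne : x ≠ φ T x) :
    ∃ p : X, (∀ t : ℝ, 0 ≤ t → φ t p = p) ∧
      Tendsto (fun t : ℝ => φ t x) atTop (𝓝 p) := by
  set x1 := φ T x with hx1
  set K := closure {w | ∃ t : ℝ, 0 ≤ t ∧ φ t x1 = w} with hKdef
  have hK : IsCompact K := hcompact x1
  have horb : ∀ t : ℝ, 0 ≤ t → φ t x1 ∈ K := fun t ht => subset_closure ⟨t, ht, rfl⟩
  have hφconts : ∀ s : ℝ, Continuous fun y : X => φ s y := fun s =>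
    hφc.comp (continuous_const.prodMk continuous_id)
  -- Lemma A: monotone period convergence
  have lemA : ∀ s : ℝ, 0 < s → x1 ≤ φ s x1 → x1 ≠ φ s x1 →
      ∃ π : X, φ s π = π ∧ Tendsto (fun m : ℕ => φ ((m : ℝ) * s) x1) atTop (𝓝 π) := by
    intro s hs hle hne'
    set a : ℕ → X := fun m => φ ((m : ℝ) * s) x1 with hadef
    have hstep : ∀ m : ℕ, a (m + 1) = φ ((m : ℝ) * s) (φ s x1) := by
      intro m
      have : ((m + 1 : ℕ) : ℝ) * s = (m : ℝ) * s + s := by push_cast; ring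
      rw [hadef]
      simp only
      rw [this, hφadd _ _ (mul_nonneg (Nat.cast_nonneg _) hs.le) hs.le]
    have hamono : Monotone a := by
      apply monotone_nat_of_le_succ
      intro m
      rw [hstep m]
      exact flow_mono hlt_le hφ0 hmono hle (mul_nonneg (Nat.cast_nonneg _) hs.le)
    have haK : ∀ m, a m ∈ K := fun m => horb _ (mul_nonneg (Nat.cast_nonneg _) hs.le)
    obtain ⟨π, hπ⟩ := mono_seq_tendsto hclosed hK hamono haK
    refine ⟨π, ?_, hπ⟩
    have hstep' : ∀ m : ℕ, a (m + 1) = φ s (a m) := by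
      intro m
      have : ((m + 1 : ℕ) : ℝ) * s = s + (m : ℝ) * s := by push_cast; ring
      rw [hadef]
      simp only
      rw [this, hφadd _ _ hs.le (mul_nonneg (Nat.cast_nonneg _) hs.le)]
    have h1 : Tendsto (fun m => a (m + 1)) atTop (𝓝 π) :=
      hπ.comp (tendsto_add_atTop_nat 1)
    have h2 : Tendsto (fun m => φ s (a m)) atTop (𝓝 (φ s π)) :=
      ((hφconts s).tendsto π).comp hπ
    exact tendsto_nhds_unique (h2.congr fun m => (hstep' m).symm) h1
  -- strict relation along the orbit and openness
  have h0 : lt x1 (φ T x1) := by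
    rw [hx1]
    exact hmono x (φ T x) hord hne T hT
  obtain ⟨U, V, hU, hV, hmemU, hmemV, hUV⟩ := hopen _ _ h0
  have hgcont : Continuous fun s : ℝ => φ s x1 :=
    hφc.comp (continuous_id.prodMk continuous_const)
  have hVmem : (fun s : ℝ => φ s x1) ⁻¹' V ∈ 𝓝 T :=
    hgcont.continuousAt.preimage_mem_nhds (hV.mem_nhds hmemV)
  obtain ⟨ε, hε, hball⟩ := Metric.mem_nhds_iff.1 hVmem
  set δ : ℝ := min (ε / 2) (T / 2) with hδdef
  have hδpos : 0 < δ := lt_min (by linarith) (by linarith)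
  have hδT : δ < T := lt_of_le_of_lt (min_le_right _ _) (by linarith)
  have hltS : ∀ s : ℝ, |s - T| ≤ δ → lt x1 (φ s x1) := by
    intro s hsd
    have : s ∈ Metric.ball T ε := by
      rw [Metric.mem_ball, Real.dist_eq]
      have : δ < ε := lt_of_le_of_lt (min_le_left _ _) (by linarith)
      linarith [hsd]
    exact hUV x1 hmemU _ (hball this)
  have hSpos : ∀ s : ℝ, |s - T| ≤ δ → 0 < s := by
    intro s hsd
    have := abs_le.1 hsd
    linarith [this.1]
  -- the limit p along period T
  have hTd : |T - T| ≤ δ := by simp [hδpos.le]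
  obtain ⟨p, hpT, hptend⟩ := lemA T hT (hlt_le _ _ (hltS T hTd)) (hlt_ne _ _ (hltS T hTd))
  -- p is fixed under every period s close to T
  have hfix : ∀ s : ℝ, |s - T| ≤ δ → φ s p = p := by
    intro s hsd
    have hs : 0 < s := hSpos s hsd
    obtain ⟨π, hπfix, hπtend⟩ :=
      lemA s hs (hlt_le _ _ (hltS s hsd)) (hlt_ne _ _ (hltS s hsd))
    have huT : Tendsto (fun j : ℕ => (j : ℝ) * T) atTop atTop :=
      Tendsto.atTop_mul_const hT tendsto_natCast_atTop_atTop
    obtain ⟨r, hr0, hrs, hpr⟩ := cluster_eq hφc hφadd x1 hs hπtend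
      (fun j => mul_nonneg (Nat.cast_nonneg _) hT.le) huT hptend
    calc φ s p = φ s (φ r π) := by rw [hpr]
      _ = φ (s + r) π := (hφadd s r hs.le hr0 π).symm
      _ = φ (r + s) π := by rw [add_comm]
      _ = φ r (φ s π) := hφadd r s hr0 hs.le π
      _ = φ r π := by rw [hπfix]
      _ = p := hpr.symm
  -- p is fixed under all small times, hence is an equilibrium
  have hsmall : ∀ r : ℝ, 0 ≤ r → r ≤ δ → φ r p = p := by
    intro r hr0 hrδ
    have hs1 : |T - δ - T| ≤ δ := by rw [show T - δ - T = -δ by ring, abs_neg, abs_of_pos hδpos]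
    have hs2 : |T - δ + r - T| ≤ δ := by
      rw [show T - δ + r - T = r - δ by ring, abs_le]
      constructor <;> linarith
    calc φ r p = φ r (φ (T - δ) p) := by rw [hfix _ hs1]
      _ = φ (r + (T - δ)) p := (hφadd r (T - δ) hr0 (by linarith) p).symm
      _ = φ (T - δ + r) p := by rw [add_comm]
      _ = p := hfix _ hs2
  have heq : ∀ t : ℝ, 0 ≤ t → φ t p = p := eq_extend hφadd hδpos hsmall
  refine ⟨p, heq, ?_⟩
  -- convergence of φ t x1 as t → ∞
  have htend1 : Tendsto (fun t : ℝ => φ t x1) atTop (𝓝 p) := by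
    by_contra hcon
    rw [Metric.tendsto_atTop] at hcon
    push_neg at hcon
    obtain ⟨ε', hε', hfar⟩ := hcon
    have hsel : ∀ k : ℕ, ∃ t : ℝ, t ≥ (k : ℝ) ∧ ε' ≤ dist (φ t x1) p := fun k => hfar (k : ℝ)
    choose u hu1 hu2 using hsel
    have hu0 : ∀ k, (0 : ℝ) ≤ u k := fun k => le_trans (Nat.cast_nonneg k) (hu1 k)
    have huK : ∀ k, φ (u k) x1 ∈ K := fun k => horb _ (hu0 k)
    obtain ⟨q, hqK, ψ, hψ, hqt⟩ := hK.tendsto_subseq huK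
    have huψ : Tendsto (fun k => u (ψ k)) atTop atTop := by
      apply tendsto_atTop_mono (fun k => le_trans (Nat.cast_le.2 (hψ.le_apply)) (hu1 (ψ k)))
      exact tendsto_natCast_atTop_atTop
    have hqt' : Tendsto (fun k => φ (u (ψ k)) x1) atTop (𝓝 q) := hqt
    obtain ⟨r, hr0, hrT, hqr⟩ := cluster_eq hφc hφadd x1 hT hptend
      (fun k => hu0 (ψ k)) huψ hqt'
    have hqp : q = p := by rw [hqr, heq r hr0]
    have hdist : Tendsto (fun k => dist (φ (u (ψ k)) x1) p) atTop (𝓝 (dist q p)) :=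
      hqt'.dist tendsto_const_nhds
    have : ε' ≤ dist q p := ge_of_tendsto hdist (Eventually.of_forall fun k => hu2 (ψ k))
    rw [hqp, dist_self] at this
    linarith
  -- transfer back to x
  have hshift : Tendsto (fun t : ℝ => φ (t - T) x1) atTop (𝓝 p) := by
    apply htend1.comp
    exact tendsto_atTop_add_const_right atTop (-T) tendsto_id
  apply hshift.congr'
  filter_upwards [eventually_ge_atTop T] with t ht
  rw [hx1, ← hφadd (t - T) T (by linarith) hT.le, sub_add_cancel]
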